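/- arXiv:1307.5392 — 4 statements merged into one kernel-verified Lean document; each statement's English description precedes it below -/
import Mathlib

section
/- Let G be a group, H a subgroup of G, and S a right transversal of H in G containing the identity. Let R be an equivalence relation on S satisfying: (i) (congruence property) for all x, x', y, y' ∈ S with R x x' and R y y', and all z, z' ∈ S with z ∈ Hxy and z' ∈ Hx'y', one has R z z'; and (ii) for every h ∈ H and x, x' ∈ S with x' ∈ Hxh, one has R x x'. Let T₁ = { t ∈ S : R t 1 } be the R-class of the identity. Then the subset N = H · T₁ = { h * t : h ∈ H, t ∈ T₁ } of G is a normal subgroup of G, and for h ∈ H and x ∈ S one has h * x ∈ N if and only if R x 1. -/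
/-- Let `G` be a group, `H` a subgroup, and `S` a right transversal of
`H` in `G` containing the identity. Let `R` be an equivalence relation on `S` that is a
congruence for the induced operation and identifies `x` with `x θ h` for all `h ∈ H`.
Let `T₁ = {t ∈ S | R t 1}` be the class of the identity. Then `N = H · T₁` is a normal
subgroup of `G`, and for `h ∈ H`, `x ∈ S`, one has `h * x ∈ N ↔ R x 1`. -/
theorem HT1_normal {G : Type*} [Group G] (H : Subgroup G) (S : Set G)
    (h1 : (1 : G) ∈ S)
    (htrans : ∀ g : G, ∃! s, s ∈ S ∧ ∃ h ∈ H, g = h * s)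
    (R : G → G → Prop)
    (hrefl : ∀ x ∈ S, R x x)
    (hsymm : ∀ x ∈ S, ∀ y ∈ S, R x y → R y x)
    (htrans' : ∀ x ∈ S, ∀ y ∈ S, ∀ z ∈ S, R x y → R y z → R x z)
    (hcong : ∀ x ∈ S, ∀ x' ∈ S, ∀ y ∈ S, ∀ y' ∈ S, R x x' → R y y' →
      ∀ z ∈ S, ∀ z' ∈ S, (∃ h ∈ H, z = h * (x * y)) → (∃ h ∈ H, z' = h * (x' * y')) →
        R z z')
    (hact : ∀ h ∈ H, ∀ x ∈ S, ∀ x' ∈ S, (∃ k ∈ H, x' = k * (x * h)) → R x x') :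
    ∃ N : Subgroup G, N.Normal ∧
      (N : Set G) = {g : G | ∃ h ∈ H, ∃ t ∈ S, R t 1 ∧ g = h * t} ∧
      ∀ h ∈ H, ∀ x ∈ S, (h * x ∈ N ↔ R x 1) := by
  classical
  choose t hmem hrep using fun g => (htrans g).exists
  have huniq : ∀ g s, s ∈ S → (∃ h ∈ H, g = h * s) → s = t g := by
    intro g s hs hh
    exact (htrans g).unique ⟨hs, hh⟩ ⟨hmem g, hrep g⟩
  have tS : ∀ x ∈ S, t x = x := by
    intro x hx
    exact (huniq x x hx ⟨1, H.one_mem, (one_mul x).symm⟩).symm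
  have t1 : t (1 : G) = 1 := tS 1 h1
  have tH : ∀ h ∈ H, ∀ g : G, t (h * g) = t g := by
    intro h hh g
    obtain ⟨k, hk, hg⟩ := hrep g
    refine (huniq (h * g) (t g) (hmem g) ⟨h * k, H.mul_mem hh hk, ?_⟩).symm
    conv_lhs => rw [hg]
    group
  -- right multiplication by an element of H preserves the R-class of t
  have tRight : ∀ g : G, ∀ h ∈ H, R (t (g * h)) (t g) := by
    intro g h hh
    obtain ⟨k, hk, hg⟩ := hrep g
    obtain ⟨m, hm, hm'⟩ := hrep (t g * h)
    have e1 : t (g * h) = t (t g * h) := by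
      refine (huniq (g * h) (t (t g * h)) (hmem _) ⟨k * m, H.mul_mem hk hm, ?_⟩).symm
      conv_lhs => rw [hg, mul_assoc, hm']
      group
    rw [e1]
    refine hsymm _ (hmem g) _ (hmem _) ?_
    refine hact h hh (t g) (hmem g) (t (t g * h)) (hmem _) ⟨m⁻¹, H.inv_mem hm, ?_⟩
    conv_rhs => rw [hm']
    group
  -- the master congruence lemma
  have M : ∀ x ∈ S, ∀ x' ∈ S, R x x' → ∀ g g' : G, R (t g) (t g') →
      R (t (x * g)) (t (x' * g')) := by
    intro x hx x' hx' hxx' g g' hgg'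
    obtain ⟨k, hk, hg⟩ := hrep g
    obtain ⟨k', hk', hg'⟩ := hrep g'
    obtain ⟨m, hm, hm'⟩ := hrep (x * k)
    obtain ⟨m', hm'', hm'''⟩ := hrep (x' * k')
    set x₁ := t (x * k) with hx₁
    set x₁' := t (x' * k') with hx₁'
    have hRx₁ : R x x₁ := by
      refine hact k hk x hx x₁ (hmem _) ⟨m⁻¹, H.inv_mem hm, ?_⟩
      conv_rhs => rw [hm']
      group
    have hRx₁' : R x' x₁' := by
      refine hact k' hk' x' hx' x₁' (hmem _) ⟨m'⁻¹, H.inv_mem hm'', ?_⟩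
      conv_rhs => rw [hm''']
      group
    have hRx₁x₁' : R x₁ x₁' := by
      refine htrans' _ (hmem _) x' hx' _ (hmem _) ?_ hRx₁'
      exact htrans' _ (hmem _) x hx x' hx' (hsymm x hx _ (hmem _) hRx₁) hxx'
    obtain ⟨p, hp, hp'⟩ := hrep (x * g)
    obtain ⟨p', hp'', hp'''⟩ := hrep (x' * g')
    have e : x * g = m * (x₁ * t g) := by
      conv_lhs => rw [hg]
      rw [← mul_assoc, hm', mul_assoc]
    have e' : x' * g' = m' * (x₁' * t g') := by
      conv_lhs => rw [hg']
      rw [← mul_assoc, hm''', mul_assoc]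
    refine hcong x₁ (hmem _) x₁' (hmem _) (t g) (hmem _) (t g') (hmem _) hRx₁x₁' hgg'
      (t (x * g)) (hmem _) (t (x' * g')) (hmem _)
      ⟨p⁻¹ * m, H.mul_mem (H.inv_mem hp) hm, ?_⟩
      ⟨p'⁻¹ * m', H.mul_mem (H.inv_mem hp'') hm'', ?_⟩
    · rw [mul_assoc, ← e]
      conv_rhs => rw [hp']
      group
    · rw [mul_assoc, ← e']
      conv_rhs => rw [hp''']
      group
  -- membership characterization
  have hchar : ∀ g : G, (∃ h ∈ H, ∃ s ∈ S, R s 1 ∧ g = h * s) ↔ R (t g) 1 := by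
    intro g
    constructor
    · rintro ⟨h, hh, s, hs, hRs, rfl⟩
      rw [tH h hh s, tS s hs]; exact hRs
    · intro hR
      obtain ⟨k, hk, hg⟩ := hrep g
      exact ⟨k, hk, t g, hmem g, hR, hg⟩
  have hclosed : ∀ a b : G, R (t a) 1 → R (t b) 1 → R (t (a * b)) 1 := by
    intro a b ha hb
    obtain ⟨k, hk, hga⟩ := hrep a
    have e : t (a * b) = t (t a * b) := by
      conv_lhs => rw [hga, mul_assoc]
      exact tH k hk _
    rw [e]
    have h2 : R (t (t a * b)) (t (1 * b)) :=
      M (t a) (hmem a) 1 h1 ha b b (hrefl _ (hmem b))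
    rw [one_mul] at h2
    exact htrans' _ (hmem _) _ (hmem b) 1 h1 h2 hb
  have hinvmem : ∀ a : G, R (t a) 1 → R (t a⁻¹) 1 := by
    intro a ha
    obtain ⟨k, hk, hga⟩ := hrep a
    have ea : a⁻¹ = (t a)⁻¹ * k⁻¹ := by
      conv_lhs => rw [hga]
      group
    have e : t a⁻¹ = t ((t a)⁻¹ * k⁻¹) := by rw [ea]
    have h2 : R (t ((t a)⁻¹ * k⁻¹)) (t (t a)⁻¹) := tRight (t a)⁻¹ k⁻¹ (H.inv_mem hk)
    have h3 : R (t (t a * (t a)⁻¹)) (t (1 * (t a)⁻¹)) :=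
      M (t a) (hmem a) 1 h1 ha (t a)⁻¹ (t a)⁻¹ (hrefl _ (hmem _))
    rw [mul_inv_cancel, one_mul, t1] at h3
    have h4 : R (t (t a)⁻¹) 1 := hsymm 1 h1 _ (hmem _) h3
    rw [e]
    exact htrans' _ (hmem _) _ (hmem _) 1 h1 h2 h4
  -- the subgroup
  refine ⟨{ carrier := {g : G | ∃ h ∈ H, ∃ s ∈ S, R s 1 ∧ g = h * s}
            mul_mem' := ?_
            one_mem' := ?_
            inv_mem' := ?_ }, ?_, rfl, ?_⟩
  · intro a b ha hb
    exact (hchar _).2 (hclosed a b ((hchar a).1 ha) ((hchar b).1 hb))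
  · exact ⟨1, H.one_mem, 1, h1, hrefl 1 h1, (one_mul 1).symm⟩
  · intro a ha
    exact (hchar _).2 (hinvmem a ((hchar a).1 ha))
  · refine { conj_mem := ?_ }
    intro n hn g
    have hn' : R (t n) 1 := (hchar n).1 hn
    refine (hchar _).2 ?_
    obtain ⟨k, hk, hgg⟩ := hrep g
    obtain ⟨m, hm, hmn⟩ := hrep n
    have e1 : g * n * g⁻¹ = k * ((t g * (n * (t g)⁻¹)) * k⁻¹) := by
      conv_lhs => rw [hgg]
      group
    have e2 : t (g * n * g⁻¹) = t ((t g * (n * (t g)⁻¹)) * k⁻¹) := by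
      rw [e1, tH k hk]
    have h2 : R (t ((t g * (n * (t g)⁻¹)) * k⁻¹)) (t (t g * (n * (t g)⁻¹))) :=
      tRight _ k⁻¹ (H.inv_mem hk)
    have e3 : t (n * (t g)⁻¹) = t (t n * (t g)⁻¹) := by
      conv_lhs => rw [hmn, mul_assoc]
      exact tH m hm _
    have h3 : R (t (t n * (t g)⁻¹)) (t (1 * (t g)⁻¹)) :=
      M (t n) (hmem n) 1 h1 hn' (t g)⁻¹ (t g)⁻¹ (hrefl _ (hmem _))
    rw [one_mul] at h3
    have h4 : R (t (n * (t g)⁻¹)) (t (t g)⁻¹) := by rw [e3]; exact h3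
    have h5 : R (t (t g * (n * (t g)⁻¹))) (t (t g * (t g)⁻¹)) :=
      M (t g) (hmem g) (t g) (hmem g) (hrefl _ (hmem g)) _ _ h4
    rw [mul_inv_cancel, t1] at h5
    rw [e2]
    exact htrans' _ (hmem _) _ (hmem _) 1 h1 h2 h5
  · intro h hh x hx
    have hc := hchar (h * x)
    rw [tH h hh x, tS x hx] at hc
    exact hc
end

section
/- Let G be a group, H a subgroup of G, and S a right transversal of H in G containing the identity. Let R be an equivalence relation on S satisfying: (i) (congruence property) for all x, x', y, y' ∈ S with R x x' and R y y', and all z, z' ∈ S with z ∈ Hxy and z' ∈ Hx'y', one has R z z'; and (ii) for every h ∈ H and x, x' ∈ S with x' ∈ Hxh, one has R x x'. Then the induced operation on S is associative modulo R: for all x, y, z ∈ S and all u, v, w, p ∈ S with u ∈ Hyz (u = y ∘ z), v ∈ Hxy (v = x ∘ y), w ∈ Hvz (w = (x ∘ y) ∘ z), and p ∈ Hxu (p = x ∘ (y ∘ z)), one has R w p. (Hence the quotient right loop S/R is a group.) -/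
/-- Let `G` be a group, `H` a subgroup, and `S` a right transversal of
`H` in `G` containing the identity. Let `R` be an equivalence relation on `S` that is a
congruence for the induced operation and identifies `x` with `x θ h` for all `h ∈ H`.
Then the induced operation is associative modulo `R`: for `x, y, z ∈ S` and `u, v, w, p ∈ S`
with `u = y ∘ z`, `v = x ∘ y`, `w = (x ∘ y) ∘ z`, `p = x ∘ (y ∘ z)`, one has `R w p`. -/
theorem assoc_mod_R {G : Type*} [Group G] (H : Subgroup G) (S : Set G)
    (h1 : (1 : G) ∈ S)
    (htrans : ∀ g : G, ∃! s, s ∈ S ∧ ∃ h ∈ H, g = h * s)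
    (R : G → G → Prop)
    (hrefl : ∀ x ∈ S, R x x)
    (hsymm : ∀ x ∈ S, ∀ y ∈ S, R x y → R y x)
    (htrans' : ∀ x ∈ S, ∀ y ∈ S, ∀ z ∈ S, R x y → R y z → R x z)
    (hcong : ∀ x ∈ S, ∀ x' ∈ S, ∀ y ∈ S, ∀ y' ∈ S, R x x' → R y y' →
      ∀ z ∈ S, ∀ z' ∈ S, (∃ h ∈ H, z = h * (x * y)) → (∃ h ∈ H, z' = h * (x' * y')) →
        R z z')
    (hact : ∀ h ∈ H, ∀ x ∈ S, ∀ x' ∈ S, (∃ k ∈ H, x' = k * (x * h)) → R x x')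
    (x y z u v w p : G)
    (hx : x ∈ S) (hy : y ∈ S) (hz : z ∈ S)
    (hu : u ∈ S) (hv : v ∈ S) (hw : w ∈ S) (hp : p ∈ S)
    (hu' : ∃ h ∈ H, u = h * (y * z))
    (hv' : ∃ h ∈ H, v = h * (x * y))
    (hw' : ∃ h ∈ H, w = h * (v * z))
    (hp' : ∃ h ∈ H, p = h * (x * u)) :
    R w p := by
  obtain ⟨h4, hh4, hueq⟩ := hu'
  obtain ⟨hv1, hhv1, hveq⟩ := hv'
  obtain ⟨h2, hh2, hweq⟩ := hw'
  obtain ⟨a, ⟨haS, k, hk, hak⟩, -⟩ := htrans (x * h4⁻¹)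
  have haeq : a = k⁻¹ * (x * h4⁻¹) := by
    rw [hak]; group
  have hRxa : R x a :=
    hact h4⁻¹ (inv_mem hh4) x hx a haS ⟨k⁻¹, inv_mem hk, haeq⟩
  exact hcong a haS x hx u hu u hu (hsymm x hx a haS hRxa) (hrefl u hu) w hw p hp
    ⟨h2 * hv1 * k, mul_mem (mul_mem hh2 hhv1) hk, by rw [hweq, hveq, haeq, hueq]; group⟩ hp'
end

section
/- Let G be a finite group and H a core-free subgroup of G. Suppose N is a normal subgroup of G containing H such that the index of H in N is 2. Then H is an elementary abelian 2-group: every element h ∈ H satisfies h² = 1, and H is commutative. (This is the group-theoretic form of the theorem: if S is a generating transversal of H in G admitting an order-2 invariant sub right loop T with S/T a group, then the group torsion G_S ≅ H is an elementary abelian 2-group.) -/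
/-- Let `G` be a finite group and `H` a core-free subgroup of `G`.
Suppose `N` is a normal subgroup of `G` containing `H` with `[N : H] = 2`. Then `H` is
an elementary abelian 2-group: every `h ∈ H` satisfies `h ^ 2 = 1`, and `H` is
commutative. -/
theorem corefree_index_two_elementary_abelian_sub {G : Type*} [Group G] [Finite G]
    (H N : Subgroup G) [N.Normal] (hcf : H.normalCore = ⊥) (hHN : H ≤ N)
    (hidx : H.relIndex N = 2) :
    (∀ h ∈ H, h ^ 2 = 1) ∧ (∀ a ∈ H, ∀ b ∈ H, a * b = b * a) := by
  -- Every element of N has square in H.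
  have hsq : ∀ n ∈ N, n ^ 2 ∈ H := by
    intro n hn
    have := Subgroup.sq_mem_of_index_two (H := H.subgroupOf N) hidx ⟨n, hn⟩
    simpa [Subgroup.mem_subgroupOf] using this
  -- Every element of N has square 1.
  have hsq1 : ∀ n ∈ N, n ^ 2 = 1 := by
    intro n hn
    have : n ^ 2 ∈ H.normalCore := by
      intro b
      have hb : b * n * b⁻¹ ∈ N := Subgroup.Normal.conj_mem ‹N.Normal› n hn b
      have := hsq _ hb
      simpa [conj_pow] using this
    rw [hcf] at this
    simpa using this
  have h1 : ∀ h ∈ H, h ^ 2 = 1 := fun h hh => hsq1 h (hHN hh)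
  refine ⟨h1, fun a ha b hb => ?_⟩
  have hab : (a * b) ^ 2 = 1 := h1 _ (H.mul_mem ha hb)
  have ha2 := h1 a ha
  have hb2 := h1 b hb
  have hainv : a⁻¹ = a := by
    rw [← mul_left_cancel_iff (a := a), mul_inv_cancel, ← pow_two, ha2]
  have hbinv : b⁻¹ = b := by
    rw [← mul_left_cancel_iff (a := b), mul_inv_cancel, ← pow_two, hb2]
  have : (a * b)⁻¹ = a * b := by
    rw [← mul_left_cancel_iff (a := a * b), mul_inv_cancel, ← pow_two, hab]
  calc a * b = (a * b)⁻¹ := this.symm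
    _ = b⁻¹ * a⁻¹ := by rw [mul_inv_rev]
    _ = b * a := by rw [hainv, hbinv]
end

section
/- Let G be a finite group and H a core-free subgroup of G contained in a normal subgroup N of G such that the index of H in N is 2. Then N is an elementary abelian 2-group: every element g ∈ N satisfies g² = 1, and N is commutative. -/
/-- Let `G` be a finite group and `H` a core-free subgroup of `G`
contained in a normal subgroup `N` with `[N : H] = 2`. Then `N` is an elementary
abelian 2-group: every `g ∈ N` satisfies `g ^ 2 = 1`, and `N` is commutative. -/
theorem corefree_index_two_elementary_abelian {G : Type*} [Group G] [Finite G]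
    (H N : Subgroup G) [N.Normal] (hcf : H.normalCore = ⊥) (hHN : H ≤ N)
    (hidx : H.relIndex N = 2) :
    (∀ g ∈ N, g ^ 2 = 1) ∧ (∀ a ∈ N, ∀ b ∈ N, a * b = b * a) := by
  -- every square of an element of N lies in H
  have hsq : ∀ n ∈ N, n ^ 2 ∈ H := by
    intro n hn
    have := Subgroup.sq_mem_of_index_two hidx (⟨n, hn⟩ : N)
    simpa [Subgroup.mem_subgroupOf] using this
  have key : ∀ g ∈ N, g ^ 2 = 1 := by
    intro g hg
    have : g ^ 2 ∈ H.normalCore := by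
      rw [Subgroup.normalCore_eq_iInf_conjAct]
      simp only [Subgroup.mem_iInf]
      intro x
      rw [Subgroup.mem_pointwise_smul_iff_inv_smul_mem]
      have hmem : x⁻¹ • g ∈ N := by
        have : (x⁻¹ : ConjAct G) • g = (ConjAct.ofConjAct x⁻¹) * g * (ConjAct.ofConjAct x⁻¹)⁻¹ := rfl
        rw [this]
        exact Subgroup.Normal.conj_mem ‹N.Normal› g hg _
      have := hsq _ hmem
      simpa [smul_pow] using this
    rw [hcf] at this
    simpa using this
  refine ⟨key, fun a ha b hb => ?_⟩
  have hab := key _ (N.mul_mem ha hb)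
  have ha2 := key a ha
  have hb2 := key b hb
  have h1 : a * b = (a * b)⁻¹ := by
    rw [eq_inv_iff_mul_eq_one, ← pow_two]; exact hab
  have h2 : a⁻¹ = a := by rw [inv_eq_iff_mul_eq_one, ← pow_two]; exact ha2
  have h3 : b⁻¹ = b := by rw [inv_eq_iff_mul_eq_one, ← pow_two]; exact hb2
  rw [h1, mul_inv_rev, h2, h3]
end
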